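/- Under the time-limited two-state discrimination setup with equal priors p₀ = p₁ = 1/2, the success probability satisfies P_succ ≤ 1/2 + (γ t ‖H‖_∞ / 2)·D(ρ₀,ρ₁), where D(ρ₀,ρ₁) = (1/2)‖ρ₀ - ρ₁‖₁ is the trace distance and γ = 3/π (or 5/π if some t·Eₙ ∈ (1,4)). -/

import Mathlib

open Matrix ComplexOrder

/-- The positive part `A⁺` of a Hermitian matrix `A`, obtained from its spectral
decomposition by keeping only the nonnegative eigenvalues. -/
noncomputable def posPart' {ι : Type*} [Fintype ι] [DecidableEq ι]
    (A : Matrix ι ι ℂ) (hA : A.IsHermitian) : Matrix ι ι ℂ :=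
  (hA.eigenvectorUnitary : Matrix ι ι ℂ) *
    Matrix.diagonal (fun i => ((max (hA.eigenvalues i) 0 : ℝ) : ℂ)) *
    star (hA.eigenvectorUnitary : Matrix ι ι ℂ)

/-- The absolute value `|A|` of a Hermitian matrix `A`, obtained from its spectral
decomposition by taking absolute values of the eigenvalues. -/
noncomputable def absPart' {ι : Type*} [Fintype ι] [DecidableEq ι]
    (A : Matrix ι ι ℂ) (hA : A.IsHermitian) : Matrix ι ι ℂ :=
  (hA.eigenvectorUnitary : Matrix ι ι ℂ) *
    Matrix.diagonal (fun i => ((|hA.eigenvalues i| : ℝ) : ℂ)) *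
    star (hA.eigenvectorUnitary : Matrix ι ι ℂ)
open Kronecker

set_option linter.unusedSectionVars false
section Helpers
open Matrix Complex Kronecker

variable {ι : Type*} [Fintype ι] [DecidableEq ι]

lemma dot_ofReal (x : ι → ℂ) :
    star x ⬝ᵥ x = ((∑ i, Complex.normSq (x i) : ℝ) : ℂ) := by
  push_cast
  simp [dotProduct, Complex.normSq_eq_conj_mul_self]

lemma dot_preserve (V : Matrix ι ι ℂ) (hV : Vᴴ * V = 1) (x : ι → ℂ) :
    star (V *ᵥ x) ⬝ᵥ (V *ᵥ x) = star x ⬝ᵥ x := by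
  rw [star_mulVec, dotProduct_mulVec, vecMul_vecMul, hV, vecMul_one]

lemma sum_normSq_mulVec (V : Matrix ι ι ℂ) (hV : Vᴴ * V = 1) (x : ι → ℂ) :
    ∑ i, Complex.normSq ((V *ᵥ x) i) = ∑ i, Complex.normSq (x i) := by
  have := dot_preserve V hV x
  rw [dot_ofReal, dot_ofReal] at this
  exact_mod_cast this

lemma abs_cexp_sub_cexp (x y : ℝ) :
    ‖Complex.exp (x * I) - Complex.exp (y * I)‖ ≤ |x - y| := by
  have h1 : Complex.exp (x * I) - Complex.exp (y * I)
      = Complex.exp (y * I) * (Complex.exp (((x - y : ℝ) : ℂ) * I) - 1) := by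
    rw [mul_sub, ← Complex.exp_add, mul_one]
    push_cast
    ring_nf
  rw [h1, norm_mul, Complex.norm_exp_ofReal_mul_I, one_mul]
  have h2 : Complex.normSq (Complex.exp (((x - y : ℝ) : ℂ) * I) - 1)
      = 2 - 2 * Real.cos (x - y) := by
    simp only [Complex.normSq_apply, Complex.sub_re, Complex.sub_im,
      Complex.exp_ofReal_mul_I_re, Complex.exp_ofReal_mul_I_im, Complex.one_re, Complex.one_im]
    nlinarith [Real.sin_sq_add_cos_sq (x - y)]
  have h3 : ‖Complex.exp (((x - y : ℝ) : ℂ) * I) - 1‖^2 ≤ |x - y|^2 := by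
    rw [Complex.sq_norm, h2, _root_.sq_abs]
    have := Real.one_sub_sq_div_two_le_cos (x := x - y)
    nlinarith
  have h4 := norm_nonneg (Complex.exp (((x - y : ℝ) : ℂ) * I) - 1)
  nlinarith [abs_nonneg (x - y)]

lemma min_le_gamma (x : ℝ) (hx : 0 ≤ x) : min 1 ((x / 2)^2) ≤ 3 / Real.pi * x := by
  have hpi := Real.pi_pos
  have hpi4 := Real.pi_le_four
  rcases le_or_gt (x * Real.pi) 12 with h | h
  · refine le_trans (min_le_right _ _) ?_
    rw [div_mul_eq_mul_div, div_pow, div_le_div_iff₀ (by norm_num) hpi]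
    nlinarith [mul_le_mul_of_nonneg_right h hx]
  · refine le_trans (min_le_left _ _) ?_
    rw [div_mul_eq_mul_div, le_div_iff₀ hpi]
    nlinarith

lemma diag_conj_bound (V : Matrix ι ι ℂ) (hV : Vᴴ * V = 1) (g : ι → ℂ) (M : ℝ)
    (hM : ∀ n, ‖g n‖ ≤ M) (x : ι → ℂ) :
    ∑ i, Complex.normSq (((V * Matrix.diagonal g * Vᴴ) *ᵥ x) i)
      ≤ M ^ 2 * ∑ i, Complex.normSq (x i) := by
  have hrw : (V * Matrix.diagonal g * Vᴴ) *ᵥ x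
      = V *ᵥ (Matrix.diagonal g *ᵥ (Vᴴ *ᵥ x)) := by
    rw [mulVec_mulVec, mulVec_mulVec]
  rw [hrw, sum_normSq_mulVec V hV]
  have h2 : ∀ z : ι → ℂ, ∑ i, Complex.normSq ((Matrix.diagonal g *ᵥ z) i)
      ≤ M ^ 2 * ∑ i, Complex.normSq (z i) := by
    intro z
    rw [Finset.mul_sum]
    refine Finset.sum_le_sum fun i _ => ?_
    rw [mulVec_diagonal, Complex.normSq_mul]
    have : Complex.normSq (g i) ≤ M ^ 2 := by
      rw [← Complex.sq_norm]
      exact pow_le_pow_left₀ (norm_nonneg _) (hM i) 2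
    exact mul_le_mul_of_nonneg_right this (Complex.normSq_nonneg _)
  calc ∑ i, Complex.normSq ((Matrix.diagonal g *ᵥ (Vᴴ *ᵥ x)) i)
      ≤ M ^ 2 * ∑ i, Complex.normSq ((Vᴴ *ᵥ x) i) := h2 _
    _ = M ^ 2 * ∑ i, Complex.normSq (x i) := by
        rw [sum_normSq_mulVec Vᴴ (by
          rwa [conjTranspose_conjTranspose, ← mul_eq_one_comm])]

lemma conj_vecMulVec (B : Matrix ι ι ℂ) (x : ι → ℂ) :
    B * vecMulVec x (star x) * Bᴴ = vecMulVec (B *ᵥ x) (star (B *ᵥ x)) := by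
  ext i j
  simp only [mul_apply, vecMulVec_apply, conjTranspose_apply, mulVec, dotProduct,
    Pi.star_apply, RCLike.star_def]
  simp only [Finset.sum_mul, Finset.mul_sum, map_sum, _root_.map_mul]
  refine Finset.sum_congr rfl fun k _ => Finset.sum_congr rfl fun l _ => by ring

lemma trace_conj_diagonal (W : Matrix ι ι ℂ) (hW : Wᴴ * W = 1) (c : ι → ℂ) :
    (W * Matrix.diagonal c * Wᴴ).trace = ∑ i, c i := by
  rw [trace_mul_cycle, hW, one_mul, trace_diagonal]

lemma trace_proj {d : ℕ} (b : Fin 2) (N : Matrix (Fin d × Fin 2) (Fin d × Fin 2) ℂ) :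
    (((1 : Matrix (Fin d) (Fin d) ℂ) ⊗ₖ Matrix.single b b (1:ℂ)) * N).trace
      = ∑ a, N (a, b) (a, b) := by
  simp [Matrix.trace, Matrix.diag, mul_apply, kroneckerMap_apply, Matrix.single,
    one_apply, Fintype.sum_prod_type, Matrix.of_apply, ite_and, Prod.ext_iff]

lemma sum_vecMulVec_eq (v : ι → ι → ℂ) (c : ι → ℂ) :
    ∑ n, c n • vecMulVec (v n) (star (v n))
      = (Matrix.of fun i n => v n i) * Matrix.diagonal c * (Matrix.of fun i n => v n i)ᴴ := by
  ext i j
  rw [Matrix.mul_assoc, mul_apply]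
  simp only [Finset.sum_apply, Matrix.sum_apply, Matrix.smul_apply, vecMulVec_apply,
    Pi.star_apply, RCLike.star_def, Matrix.diagonal_mul, conjTranspose_apply,
    Matrix.of_apply, smul_eq_mul]
  refine Finset.sum_congr rfl fun n _ => by ring

lemma V_unitary (v : ι → ι → ℂ)
    (hv : ∀ i j, star (v i) ⬝ᵥ v j = if i = j then 1 else 0) :
    (Matrix.of fun i n => v n i)ᴴ * (Matrix.of fun i n => v n i) = 1 := by
  ext i j
  have := hv i j
  simp only [dotProduct, Pi.star_apply, RCLike.star_def] at this
  simp only [mul_apply, conjTranspose_apply, Matrix.of_apply, one_apply, RCLike.star_def]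
  rw [← this]

lemma proj_sum {d : ℕ} :
    (1 : Matrix (Fin d) (Fin d) ℂ) ⊗ₖ Matrix.single (0 : Fin 2) (0 : Fin 2) (1:ℂ)
      + (1 : Matrix (Fin d) (Fin d) ℂ) ⊗ₖ Matrix.single (1 : Fin 2) (1 : Fin 2) (1:ℂ)
      = 1 := by
  ext ⟨a,b⟩ ⟨c,e⟩
  fin_cases b <;> fin_cases e <;>
    simp [kroneckerMap_apply, Matrix.single, one_apply, Prod.ext_iff]

lemma kron_decomp {d : ℕ} (W : Matrix (Fin d) (Fin d) ℂ) (lam : Fin d → ℝ) :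
    (W * Matrix.diagonal (fun i => (lam i : ℂ)) * Wᴴ)
        ⊗ₖ Matrix.single (0:Fin 2) (0:Fin 2) (1:ℂ)
      = ∑ i, (lam i : ℂ) • vecMulVec (fun p => if p.2 = 0 then W p.1 i else 0)
          (star (fun p => if p.2 = 0 then W p.1 i else 0)) := by
  ext ⟨a,b⟩ ⟨c,e⟩
  rw [kroneckerMap_apply, Matrix.mul_assoc, mul_apply]
  simp only [Matrix.sum_apply, Matrix.smul_apply, vecMulVec_apply,
    Pi.star_apply, RCLike.star_def, Matrix.diagonal_mul, conjTranspose_apply,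
    smul_eq_mul, Matrix.single, Matrix.of_apply]
  by_cases hb : b = 0 <;> by_cases he : e = 0
  · subst hb he
    simp only [if_pos rfl, and_self, if_true, mul_one]
    refine Finset.sum_congr rfl fun n _ => by ring
  · simp [hb, he, eq_comm (b := e)]
  · simp [hb, he, eq_comm (b := b)]
  · simp [hb, he, eq_comm (b := b), eq_comm (b := e)]

lemma conj_mul_conj (V : Matrix ι ι ℂ) (hVl : Vᴴ * V = 1) (f k : ι → ℂ) :
    (V * Matrix.diagonal f * Vᴴ) * (V * Matrix.diagonal k * Vᴴ)
      = V * Matrix.diagonal (fun n => f n * k n) * Vᴴ := by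
  have h2 : ∀ X : Matrix ι ι ℂ, Vᴴ * (V * X) = X := fun X => by
    rw [← Matrix.mul_assoc, hVl, one_mul]
  calc (V * Matrix.diagonal f * Vᴴ) * (V * Matrix.diagonal k * Vᴴ)
      = V * (Matrix.diagonal f * (Vᴴ * (V * (Matrix.diagonal k * Vᴴ)))) := by
        simp only [Matrix.mul_assoc]
    _ = V * (Matrix.diagonal f * (Matrix.diagonal k * Vᴴ)) := by rw [h2]
    _ = V * Matrix.diagonal (fun n => f n * k n) * Vᴴ := by
        rw [← Matrix.mul_assoc (Matrix.diagonal f), Matrix.diagonal_mul_diagonal,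
          Matrix.mul_assoc]

end Helpers
set_option maxHeartbeats 1000000
open scoped Classical in
/-- Time-limited two-state discrimination with equal priors:
`P_succ ≤ 1/2 + (γ t ‖H‖_∞ / 2) D(ρ₀, ρ₁)` where `D(ρ₀,ρ₁) = (1/2)‖ρ₀ - ρ₁‖₁` is the
trace distance, `γ = 3/π` (or `5/π` if some `t Eₙ ∈ (1,4)`). -/
theorem two_state_equal_priors_bound {d : ℕ}
    (ρ₀ ρ₁ : Matrix (Fin d) (Fin d) ℂ)
    (hρ₀ : ρ₀.PosSemidef) (hρ₁ : ρ₁.PosSemidef)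
    (htr₀ : ρ₀.trace = 1) (htr₁ : ρ₁.trace = 1)
    (t : ℝ) (ht : 0 ≤ t)
    (E : Fin d × Fin 2 → ℝ) (hE : ∀ n, 0 ≤ E n)
    (v : Fin d × Fin 2 → Fin d × Fin 2 → ℂ)
    (hv : ∀ i j, star (v i) ⬝ᵥ v j = if i = j then 1 else 0)
    (H : Matrix (Fin d × Fin 2) (Fin d × Fin 2) ℂ)
    (hH : H = ∑ n, (E n : ℂ) • vecMulVec (v n) (star (v n)))
    (U : Matrix (Fin d × Fin 2) (Fin d × Fin 2) ℂ)
    (hU : U = NormedSpace.exp ((-(Complex.I * (t : ℂ))) • H))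
    (Emax : ℝ) (hEmax : ∀ n, E n ≤ Emax) (hEmax' : ∃ n, E n = Emax)
    (hA : (ρ₀ - ρ₁).IsHermitian) :
    (1 / 2 : ℂ) * ((((1 : Matrix (Fin d) (Fin d) ℂ) ⊗ₖ Matrix.single (0 : Fin 2) 0 (1 : ℂ)) *
          (U * (ρ₀ ⊗ₖ Matrix.single (0 : Fin 2) 0 (1 : ℂ)) * Uᴴ)).trace +
        (((1 : Matrix (Fin d) (Fin d) ℂ) ⊗ₖ Matrix.single (1 : Fin 2) 1 (1 : ℂ)) *
          (U * (ρ₁ ⊗ₖ Matrix.single (0 : Fin 2) 0 (1 : ℂ)) * Uᴴ)).trace) ≤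
    (1 / 2 : ℂ) +
      (((if ∃ n, 1 < t * E n ∧ t * E n < 4 then 5 / Real.pi else 3 / Real.pi) *
          t * Emax / 2 : ℝ) : ℂ) *
        ((1 / 2 : ℂ) * (absPart' (ρ₀ - ρ₁) hA).trace) := by
  obtain ⟨n₀, hn₀⟩ := hEmax'
  have hEmax0 : 0 ≤ Emax := hn₀ ▸ hE n₀
  have hx0 : 0 ≤ t * Emax := mul_nonneg ht hEmax0
  have hpi := Real.pi_pos
  set γr : ℝ := if ∃ n, 1 < t * E n ∧ t * E n < 4 then 5 / Real.pi else 3 / Real.pi with hγr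
  have hγ : 3 / Real.pi ≤ γr := by
    rw [hγr]
    split_ifs
    · rw [div_le_div_iff₀ hpi hpi]
      nlinarith
    · exact le_refl _
  -- the unitary V diagonalizing H
  set V : Matrix (Fin d × Fin 2) (Fin d × Fin 2) ℂ := Matrix.of (fun i n => v n i) with hVdef
  have hVl : Vᴴ * V = 1 := V_unitary v hv
  have hVr : V * Vᴴ = 1 := mul_eq_one_comm.mp hVl
  have hHd : H = V * Matrix.diagonal (fun n => (E n : ℂ)) * Vᴴ := by
    rw [hH, sum_vecMulVec_eq]
  set g : Fin d × Fin 2 → ℂ := fun n => Complex.exp (-(Complex.I * t) * E n) with hgdef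
  have hUd : U = V * Matrix.diagonal g * Vᴴ := by
    have hVinv : V⁻¹ = Vᴴ := Matrix.inv_eq_left_inv hVl
    have hVu : IsUnit V := ⟨⟨V, Vᴴ, hVr, hVl⟩, rfl⟩
    have hsm : (-(Complex.I * (t : ℂ))) • H
        = V * Matrix.diagonal (fun n => -(Complex.I * t) * E n) * V⁻¹ := by
      rw [hVinv, hHd, ← Matrix.smul_mul, ← Matrix.mul_smul, ← Matrix.diagonal_smul]
      rfl
    rw [hU, hsm, Matrix.exp_conj V (Matrix.diagonal fun n => -(Complex.I * (t:ℂ)) * (E n : ℂ)) hVu, Matrix.exp_diagonal, hVinv]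
    have hexp : NormedSpace.exp (fun n : Fin d × Fin 2 => -(Complex.I * (t:ℂ)) * (E n:ℂ)) = g := by
      funext n
      rw [Pi.coe_exp, ← Complex.exp_eq_exp_ℂ]
    rw [hexp]
  have hUc : Uᴴ = V * Matrix.diagonal (star g) * Vᴴ := by
    rw [hUd]
    simp only [conjTranspose_mul, conjTranspose_conjTranspose,
      Matrix.diagonal_conjTranspose, Matrix.mul_assoc]
  have hgx : ∀ n, -(Complex.I * (t : ℂ)) * (E n : ℂ) = ((-(t * E n) : ℝ) : ℂ) * Complex.I := by
    intro n; push_cast; ring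
  have hgabs : ∀ n, ‖g n‖ = 1 := by
    intro n
    show ‖Complex.exp (-(Complex.I * t) * E n)‖ = 1
    rw [hgx n, Complex.norm_exp_ofReal_mul_I]
  have hUl : Uᴴ * U = 1 := by
    rw [hUc, hUd, conj_mul_conj V hVl]
    have h1 : (fun n => star g n * g n) = fun _ => (1 : ℂ) := by
      funext n
      rw [Pi.star_apply, RCLike.star_def, ← Complex.normSq_eq_conj_mul_self,
        ← Complex.sq_norm, hgabs n]
      norm_num
    rw [h1, Matrix.diagonal_one, mul_one, hVr]
  have hUtrace : ∀ M : Matrix (Fin d × Fin 2) (Fin d × Fin 2) ℂ,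
      (U * M * Uᴴ).trace = M.trace := by
    intro M
    rw [trace_mul_comm, ← Matrix.mul_assoc, hUl, one_mul]
  -- spectral decomposition of ρ₀ - ρ₁
  set W : Matrix (Fin d) (Fin d) ℂ := (hA.eigenvectorUnitary : Matrix (Fin d) (Fin d) ℂ)
    with hWdef
  set lam : Fin d → ℝ := hA.eigenvalues with hlamdef
  have hWmem := hA.eigenvectorUnitary.2
  rw [Unitary.mem_iff] at hWmem
  have hWl : Wᴴ * W = 1 := hWmem.1
  have hAd : ρ₀ - ρ₁ = W * Matrix.diagonal (fun i => (lam i : ℂ)) * Wᴴ := hA.spectral_theorem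
  set φ : Fin d → (Fin d × Fin 2) → ℂ :=
    fun i p => if p.2 = 0 then W p.1 i else 0 with hφdef
  set T : Fin d → ℝ := fun i => ∑ a, Complex.normSq ((U *ᵥ φ i) (a, 1)) with hTdef
  -- key trace identity
  have hterm : ∀ i : Fin d,
      ((((1 : Matrix (Fin d) (Fin d) ℂ) ⊗ₖ Matrix.single (1 : Fin 2) (1 : Fin 2) (1 : ℂ))) *
        (U * ((lam i : ℂ) • vecMulVec (φ i) (star (φ i))) * Uᴴ)).trace
      = (lam i : ℂ) * ((T i : ℝ) : ℂ) := by
    intro i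
    rw [Matrix.mul_smul, Matrix.smul_mul, Matrix.mul_smul, trace_smul, smul_eq_mul]
    congr 1
    rw [conj_vecMulVec, trace_proj]
    rw [hTdef]
    push_cast
    refine Finset.sum_congr rfl fun a _ => ?_
    simp only [vecMulVec_apply, Pi.star_apply, RCLike.star_def, Complex.mul_conj]
  have hKey : ((((1 : Matrix (Fin d) (Fin d) ℂ) ⊗ₖ Matrix.single (1 : Fin 2) (1 : Fin 2) (1 : ℂ))) *
      (U * ((ρ₀ - ρ₁) ⊗ₖ Matrix.single (0 : Fin 2) (0 : Fin 2) (1 : ℂ)) * Uᴴ)).trace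
      = ((∑ i, lam i * T i : ℝ) : ℂ) := by
    rw [hAd, kron_decomp, Finset.mul_sum, Finset.sum_mul, Finset.mul_sum, trace_sum]
    calc ∑ i, ((((1 : Matrix (Fin d) (Fin d) ℂ) ⊗ₖ Matrix.single (1 : Fin 2) (1 : Fin 2) (1 : ℂ))) *
          (U * ((lam i : ℂ) • vecMulVec (φ i) (star (φ i))) * Uᴴ)).trace
        = ∑ i, (lam i : ℂ) * ((T i : ℝ) : ℂ) := Finset.sum_congr rfl fun i _ => hterm i
      _ = ((∑ i, lam i * T i : ℝ) : ℂ) := by push_cast; rfl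
  -- bounds on T
  have hT0 : ∀ i, 0 ≤ T i := fun i => Finset.sum_nonneg fun a _ => Complex.normSq_nonneg _
  have hφsum : ∀ i, ∑ p, Complex.normSq (φ i p) = 1 := by
    intro i
    have h1 : (Wᴴ * W) i i = 1 := by rw [hWl]; simp [one_apply]
    rw [mul_apply] at h1
    simp only [conjTranspose_apply, RCLike.star_def] at h1
    have h2 : ((∑ a, Complex.normSq (W a i) : ℝ) : ℂ) = 1 := by
      rw [← h1]
      push_cast
      refine Finset.sum_congr rfl fun a _ => ?_
      rw [Complex.normSq_eq_conj_mul_self]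
    have h3 : ∑ a, Complex.normSq (W a i) = 1 := by exact_mod_cast h2
    rw [Fintype.sum_prod_type]
    calc ∑ a : Fin d, ∑ b : Fin 2, Complex.normSq (φ i (a, b))
        = ∑ a : Fin d, Complex.normSq (W a i) := by
          refine Finset.sum_congr rfl fun a _ => ?_
          rw [Fin.sum_univ_two]
          simp [hφdef]
      _ = 1 := h3
  have hsub : ∀ z : (Fin d × Fin 2) → ℂ,
      ∑ a, Complex.normSq (z (a, 1)) ≤ ∑ p, Complex.normSq (z p) := by
    intro z
    rw [Fintype.sum_prod_type]
    refine Finset.sum_le_sum fun a _ => ?_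
    rw [Fin.sum_univ_two]
    exact le_add_of_nonneg_left (Complex.normSq_nonneg _)
  have hT1 : ∀ i, T i ≤ 1 := by
    intro i
    calc T i ≤ ∑ p, Complex.normSq ((U *ᵥ φ i) p) := hsub _
      _ = ∑ p, Complex.normSq (φ i p) := sum_normSq_mulVec U hUl _
      _ = 1 := hφsum i
  set c0 : ℂ := Complex.exp (((-(t * (Emax / 2)) : ℝ) : ℂ) * Complex.I) with hc0
  have habs : ∀ n, ‖g n - c0‖ ≤ t * Emax / 2 := by
    intro n
    show ‖Complex.exp (-(Complex.I * t) * E n) - c0‖ ≤ t * Emax / 2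
    rw [hgx n, hc0]
    refine le_trans (abs_cexp_sub_cexp _ _) ?_
    have h1 : |(-(t * E n)) - (-(t * (Emax / 2)))| = t * |Emax / 2 - E n| := by
      rw [show (-(t * E n)) - (-(t * (Emax / 2))) = t * (Emax / 2 - E n) by ring,
        abs_mul, abs_of_nonneg ht]
    rw [h1]
    have h2 : |Emax / 2 - E n| ≤ Emax / 2 :=
      abs_le.mpr ⟨by linarith [hEmax n], by linarith [hE n]⟩
    calc t * |Emax / 2 - E n| ≤ t * (Emax / 2) := mul_le_mul_of_nonneg_left h2 ht
      _ = t * Emax / 2 := by ring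
  have hT2 : ∀ i, T i ≤ (t * Emax / 2) ^ 2 := by
    intro i
    have e1 : Matrix.diagonal (fun _ : Fin d × Fin 2 => c0) = c0 • 1 := by
      ext p q
      by_cases h : p = q <;>
        simp [Matrix.diagonal_apply, h, Matrix.one_apply, Matrix.smul_apply]
    have e2 : Matrix.diagonal (fun n : Fin d × Fin 2 => g n - c0)
        = Matrix.diagonal g - Matrix.diagonal (fun _ => c0) := by
      rw [Matrix.diagonal_sub]
    have hsm1 : U - c0 • 1 = V * Matrix.diagonal (fun n => g n - c0) * Vᴴ := by
      rw [e2, Matrix.mul_sub, Matrix.sub_mul, ← hUd, e1, Matrix.mul_smul,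
        Matrix.mul_one, Matrix.smul_mul, hVr]
    have hψχ : ∀ a : Fin d, (U *ᵥ φ i) (a, 1) = ((U - c0 • 1) *ᵥ φ i) (a, 1) := by
      intro a
      rw [Matrix.sub_mulVec]
      have hz : ((c0 • (1 : Matrix (Fin d × Fin 2) (Fin d × Fin 2) ℂ)) *ᵥ φ i) (a, 1) = 0 := by
        rw [Matrix.smul_mulVec, Matrix.one_mulVec]
        have : φ i (a, 1) = 0 := by simp [hφdef]
        simp [this]
      simp [hz]
    calc T i = ∑ a, Complex.normSq (((U - c0 • 1) *ᵥ φ i) (a, 1)) := by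
          rw [hTdef]
          exact Finset.sum_congr rfl fun a _ => by rw [hψχ a]
      _ ≤ ∑ p, Complex.normSq (((U - c0 • 1) *ᵥ φ i) p) := hsub ((U - c0 • 1) *ᵥ φ i)
      _ ≤ (t * Emax / 2) ^ 2 * ∑ p, Complex.normSq (φ i p) := by
          rw [hsm1]
          exact diag_conj_bound V hVl _ _ habs _
      _ = (t * Emax / 2) ^ 2 := by rw [hφsum i, mul_one]
  have hTB : ∀ i, T i ≤ 3 / Real.pi * (t * Emax) := fun i =>
    le_trans (le_min (hT1 i) (hT2 i)) (min_le_gamma (t * Emax) hx0)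
  -- eigenvalues sum to zero
  have hlam0 : ∑ i, lam i = 0 := by
    have h1 : (ρ₀ - ρ₁).trace = 0 := by rw [trace_sub, htr₀, htr₁, sub_self]
    rw [hAd, trace_conj_diagonal W hWl] at h1
    exact_mod_cast h1
  have habsTr : (absPart' (ρ₀ - ρ₁) hA).trace = ((∑ i, |lam i| : ℝ) : ℂ) := by
    show ((hA.eigenvectorUnitary : Matrix (Fin d) (Fin d) ℂ) *
      Matrix.diagonal (fun i => ((|hA.eigenvalues i| : ℝ) : ℂ)) *
      star (hA.eigenvectorUnitary : Matrix (Fin d) (Fin d) ℂ)).trace = _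
    rw [Matrix.star_eq_conjTranspose]
    rw [trace_conj_diagonal _ hWl]
    push_cast
    rfl
  -- assembling the success probability
  have hkronsub : (ρ₀ - ρ₁) ⊗ₖ Matrix.single (0 : Fin 2) (0 : Fin 2) (1 : ℂ)
      = ρ₀ ⊗ₖ Matrix.single (0 : Fin 2) (0 : Fin 2) (1 : ℂ)
        - ρ₁ ⊗ₖ Matrix.single (0 : Fin 2) (0 : Fin 2) (1 : ℂ) := by
    ext p q
    simp [kroneckerMap_apply, Matrix.sub_apply, sub_mul]
  have htrσ : ∀ ρ : Matrix (Fin d) (Fin d) ℂ, ρ.trace = 1 →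
      (U * (ρ ⊗ₖ Matrix.single (0 : Fin 2) (0 : Fin 2) (1 : ℂ)) * Uᴴ).trace = 1 := by
    intro ρ hρ
    rw [hUtrace, trace_kronecker, hρ, Matrix.trace_single_eq_same, one_mul]
  have hLHS : (((1 : Matrix (Fin d) (Fin d) ℂ) ⊗ₖ Matrix.single (0 : Fin 2) (0 : Fin 2) (1 : ℂ)) *
        (U * (ρ₀ ⊗ₖ Matrix.single (0 : Fin 2) (0 : Fin 2) (1 : ℂ)) * Uᴴ)).trace +
      (((1 : Matrix (Fin d) (Fin d) ℂ) ⊗ₖ Matrix.single (1 : Fin 2) (1 : Fin 2) (1 : ℂ)) *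
        (U * (ρ₁ ⊗ₖ Matrix.single (0 : Fin 2) (0 : Fin 2) (1 : ℂ)) * Uᴴ)).trace
      = 1 - ((∑ i, lam i * T i : ℝ) : ℂ) := by
    have hP0 : (1 : Matrix (Fin d) (Fin d) ℂ) ⊗ₖ Matrix.single (0 : Fin 2) (0 : Fin 2) (1 : ℂ)
        = 1 - ((1 : Matrix (Fin d) (Fin d) ℂ) ⊗ₖ Matrix.single (1 : Fin 2) (1 : Fin 2) (1 : ℂ)) :=
      eq_sub_of_add_eq proj_sum
    rw [hP0, Matrix.sub_mul, one_mul, trace_sub, htrσ ρ₀ htr₀]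
    rw [← hKey, hkronsub, Matrix.mul_sub, Matrix.sub_mul, Matrix.mul_sub, trace_sub]
    ring
  rw [hLHS, habsTr]
  have hfin : (1 - (∑ i, lam i * T i)) / 2 ≤ 1 / 2 + γr * t * Emax / 2 * ((∑ i, |lam i|) / 2) := by
    have hS0 : 0 ≤ ∑ i, |lam i| := Finset.sum_nonneg fun i _ => abs_nonneg _
    have hpt : ∀ i, -(lam i) * T i ≤ 3 / Real.pi * (t * Emax) * (|lam i| - lam i) / 2 := by
      intro i
      rcases le_or_gt 0 (lam i) with h | h
      · rw [abs_of_nonneg h]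
        nlinarith [mul_nonneg h (hT0 i)]
      · rw [abs_of_neg h]
        nlinarith [mul_le_mul_of_nonneg_left (hTB i) (le_of_lt (neg_pos.mpr h))]
    have hsum' : -(∑ i, lam i * T i) ≤ 3 / Real.pi * (t * Emax) * (∑ i, |lam i|) / 2 := by
      calc -(∑ i, lam i * T i) = ∑ i, -(lam i) * T i := by
            rw [← Finset.sum_neg_distrib]
            exact Finset.sum_congr rfl fun i _ => by ring
        _ ≤ ∑ i, 3 / Real.pi * (t * Emax) * (|lam i| - lam i) / 2 :=
            Finset.sum_le_sum fun i _ => hpt i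
        _ = 3 / Real.pi * (t * Emax) * ((∑ i, |lam i|) - ∑ i, lam i) / 2 := by
            rw [← Finset.sum_div, ← Finset.mul_sum, Finset.sum_sub_distrib]
        _ = 3 / Real.pi * (t * Emax) * (∑ i, |lam i|) / 2 := by rw [hlam0]; ring
    nlinarith [mul_le_mul_of_nonneg_right hγ (mul_nonneg hx0 hS0), hsum']
  calc (1 / 2 : ℂ) * (1 - ((∑ i, lam i * T i : ℝ) : ℂ))
      = (((1 - ∑ i, lam i * T i) / 2 : ℝ) : ℂ) := by push_cast; ring
    _ ≤ ((1 / 2 + γr * t * Emax / 2 * ((∑ i, |lam i|) / 2) : ℝ) : ℂ) :=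
        Complex.real_le_real.mpr hfin
    _ = (1 / 2 : ℂ) + ((γr * t * Emax / 2 : ℝ) : ℂ) * ((1 / 2 : ℂ) * ((∑ i, |lam i| : ℝ) : ℂ)) := by
        push_cast; ring
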